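/- Let P be an asymptotically stable Feller Markov operator on a Polish space S with unique invariant probability measure μ*, and let U be its dual operator. If the interior of the support of μ* is nonempty, then for every bounded continuous f : S → ℝ and every ε > 0 there exist an open ball B contained in supp μ* and N ∈ ℕ such that |Uⁿf(x) − Uⁿf(y)| ≤ ε for all x, y ∈ B and all n ≥ N. -/

import Mathlib

open MeasureTheory Filter Metric Topology
open scoped ENNReal

/-- The support of a finite Borel measure on a metric space. -/
def measSupport {S : Type*} [MetricSpace S] [MeasurableSpace S] (μ : MeasureTheory.Measure S) :
    Set S :=
  {x : S | ∀ r > 0, 0 < μ (Metric.ball x r)}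

/-- Lemma 1 of the paper: for an asymptotically stable Feller Markov operator whose invariant
measure has support with nonempty interior, the iterates `Uⁿf` become uniformly almost constant
on some ball inside the support. -/
theorem stmt2 {S : Type*} [MetricSpace S] [PolishSpace S] [MeasurableSpace S] [BorelSpace S]
    (P : Measure S → Measure S)
    (hadd : ∀ μ ν : Measure S, P (μ + ν) = P μ + P ν)
    (hsmul : ∀ (c : ℝ≥0∞) (μ : Measure S), P (c • μ) = c • P μ)
    (hmass : ∀ μ : Measure S, P μ Set.univ = μ Set.univ)
    (U : (S → ℝ) → (S → ℝ))
    (hU : ∀ (g : S → ℝ) (C : ℝ), Measurable g → (∀ x, |g x| ≤ C) →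
      Measurable (U g) ∧ ∀ x, |U g x| ≤ C)
    (hdual : ∀ g : S → ℝ, Measurable g → (∃ C, ∀ x, |g x| ≤ C) →
      ∀ μ : Measure S, ∫ x, g x ∂ (P μ) = ∫ x, U g x ∂ μ)
    (hFeller : ∀ g : S → ℝ, Continuous g → (∃ C, ∀ x, |g x| ≤ C) → Continuous (U g))
    (μstar : Measure S) [IsProbabilityMeasure μstar] (hinv : P μstar = μstar)
    (huniq : ∀ μ : Measure S, IsProbabilityMeasure μ → P μ = μ → μ = μstar)
    (hstab : ∀ μ : Measure S, IsProbabilityMeasure μ →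
      ∀ g : S → ℝ, Continuous g → (∃ C, ∀ x, |g x| ≤ C) →
        Tendsto (fun n => ∫ x, g x ∂ (P^[n] μ)) atTop (𝓝 (∫ x, g x ∂ μstar)))
    (hint : (interior (measSupport μstar)).Nonempty)
    (f : S → ℝ) (hfc : Continuous f) (hfb : ∃ C, ∀ x, |f x| ≤ C)
    (ε : ℝ) (hε : 0 < ε) :
    ∃ (z : S) (r : ℝ) (N : ℕ), 0 < r ∧ Metric.ball z r ⊆ measSupport μstar ∧
      ∀ x ∈ Metric.ball z r, ∀ y ∈ Metric.ball z r, ∀ n ≥ N,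
        |U^[n] f x - U^[n] f y| ≤ ε := by
  obtain ⟨C, hC⟩ := hfb
  -- iterates are measurable, bounded, continuous
  have hiter : ∀ n : ℕ, Measurable (U^[n] f) ∧ (∀ x, |U^[n] f x| ≤ C) ∧
      Continuous (U^[n] f) := by
    intro n
    induction n with
    | zero => exact ⟨hfc.measurable, hC, hfc⟩
    | succ n ih =>
      obtain ⟨hm, hb, hc⟩ := ih
      rw [Function.iterate_succ_apply']
      obtain ⟨hm', hb'⟩ := hU _ C hm hb
      exact ⟨hm', hb', hFeller _ hc ⟨C, hb⟩⟩
  have hmeas : ∀ n : ℕ, Measurable (U^[n] f) := fun n => (hiter n).1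
  have hbd : ∀ n : ℕ, ∀ x, |U^[n] f x| ≤ C := fun n => (hiter n).2.1
  have hcont : ∀ n : ℕ, Continuous (U^[n] f) := fun n => (hiter n).2.2
  -- dual iteration formula
  have hdualn : ∀ n : ℕ, ∀ μ : Measure S, ∫ x, f x ∂ (P^[n] μ) = ∫ x, U^[n] f x ∂ μ := by
    intro n
    induction n with
    | zero => intro μ; rfl
    | succ n ih =>
      intro μ
      rw [Function.iterate_succ_apply, ih (P μ),
        hdual _ (hmeas n) ⟨C, hbd n⟩ μ]
      congr 1
      ext x
      rw [Function.iterate_succ_apply']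
  set c : ℝ := ∫ x, f x ∂ μstar with hceq
  -- pointwise convergence
  have hpt : ∀ x : S, Tendsto (fun n => U^[n] f x) atTop (𝓝 c) := by
    intro x
    have h1 := hstab (Measure.dirac x) (by infer_instance) f hfc ⟨C, hC⟩
    have heq : ∀ n : ℕ, (∫ y, f y ∂ (P^[n] (Measure.dirac x))) = U^[n] f x := by
      intro n
      rw [hdualn n, integral_dirac' _ _ ((hmeas n).stronglyMeasurable)]
    simpa only [heq] using h1
  -- the Baire sets
  set F : ℕ → Set S := fun N => {x | ∀ n ≥ N, |U^[n] f x - c| ≤ ε / 2} with hF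
  have hFclosed : ∀ N, IsClosed (F N) := by
    intro N
    have hFe : F N = ⋂ n, ⋂ (_ : n ≥ N), {x | |U^[n] f x - c| ≤ ε / 2} := by
      ext x; simp [hF]
    rw [hFe]
    exact isClosed_iInter fun n => isClosed_iInter fun _ =>
      isClosed_le (((hcont n).sub continuous_const).abs) continuous_const
  have hFcover : ∀ x : S, ∃ N, x ∈ F N := by
    intro x
    obtain ⟨N, hN⟩ := Metric.tendsto_atTop.mp (hpt x) (ε / 2) (by linarith)
    refine ⟨N, fun n hn => ?_⟩
    have h2 := hN n hn
    rw [Real.dist_eq] at h2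
    linarith
  -- Baire category on the open set W
  set W : Set S := interior (measSupport μstar) with hWdef
  have hWopen : IsOpen W := isOpen_interior
  haveI : PolishSpace W := hWopen.polishSpace
  haveI : BaireSpace W := by
    letI m := TopologicalSpace.upgradeIsCompletelyMetrizable W
    letI pm : PseudoMetricSpace W := m.toMetricSpace.toPseudoMetricSpace
    letI u : UniformSpace W := pm.toUniformSpace
    haveI cg : (@uniformity W u).IsCountablyGenerated :=
      @EMetric.instIsCountablyGeneratedUniformity W (@PseudoMetricSpace.toPseudoEMetricSpace W pm)
    exact BaireSpace.of_completelyPseudoMetrizable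
  haveI : Nonempty W := ⟨⟨hint.choose, hint.choose_spec⟩⟩
  have hGclosed : ∀ N, IsClosed ((Subtype.val : W → S) ⁻¹' F N) := fun N =>
    (hFclosed N).preimage continuous_subtype_val
  have hGcover : ⋃ N, (Subtype.val : W → S) ⁻¹' F N = Set.univ := by
    ext x
    simp only [Set.mem_iUnion, Set.mem_univ, iff_true, Set.mem_preimage]
    exact hFcover x
  obtain ⟨N, hNne⟩ := nonempty_interior_of_iUnion_of_closed hGclosed hGcover
  obtain ⟨u, hu⟩ := hNne
  -- push down to S
  have himg : IsOpen ((Subtype.val : W → S) '' interior ((Subtype.val : W → S) ⁻¹' F N)) :=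
    hWopen.isOpenEmbedding_subtypeVal.isOpenMap _ isOpen_interior
  have huin : (u : S) ∈ (Subtype.val : W → S) '' interior ((Subtype.val : W → S) ⁻¹' F N) :=
    ⟨u, hu, rfl⟩
  obtain ⟨r, hr, hball⟩ := Metric.isOpen_iff.mp himg _ huin
  have hsub : Metric.ball (u : S) r ⊆ F N ∩ W := by
    intro y hy
    obtain ⟨y', hy'mem, hy'eq⟩ := hball hy
    have h0 : y' ∈ (Subtype.val ⁻¹' F N) := interior_subset hy'mem
    have h1 : (y' : S) ∈ F N := h0
    have h2 : (y' : S) ∈ W := y'.2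
    rw [hy'eq] at h1 h2
    exact ⟨h1, h2⟩
  refine ⟨u, r, N, hr, fun y hy => interior_subset (hsub hy).2, ?_⟩
  intro x hx y hy n hn
  have hxF := (hsub hx).1 n hn
  have hyF := (hsub hy).1 n hn
  have habs : |U^[n] f x - U^[n] f y| ≤ |U^[n] f x - c| + |U^[n] f y - c| := by
    calc |U^[n] f x - U^[n] f y| = |(U^[n] f x - c) + (c - U^[n] f y)| := by ring_nf
      _ ≤ |U^[n] f x - c| + |c - U^[n] f y| := abs_add_le _ _
      _ = |U^[n] f x - c| + |U^[n] f y - c| := by rw [abs_sub_comm c]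
  linarith
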